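/- For every vertex v of the integer hull of a knapsack polytope {x ≥ 0 : aᵀx = b} (a ∈ ℤ^n non-zero, b ∈ ℤ), the support size satisfies |supp(v)| ≤ log₂(3.51 · ‖a[supp(v)]‖₂), where a[supp(v)] is the restriction of a to the coordinates in supp(v). -/
import Mathlib

lemma varid {ι : Type*} [DecidableEq ι] (c : ι → ℤ) (S : Finset ι) :
    ∑ T ∈ S.powerset, (∑ i ∈ T, c i - ∑ i ∈ S \ T, c i)^2
      = 2 ^ S.card * ∑ i ∈ S, (c i)^2 := by
  induction S using Finset.induction with
  | empty => simp
  | @insert a s ha ih =>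
    rw [Finset.sum_powerset_insert ha]
    have h1 : ∀ T ∈ s.powerset,
        (∑ i ∈ T, c i - ∑ i ∈ insert a s \ T, c i)^2
        = (∑ i ∈ T, c i - ∑ i ∈ s \ T, c i - c a)^2 := by
      intro T hT
      have haT : a ∉ T := fun h => ha (Finset.mem_powerset.1 hT h)
      rw [Finset.insert_sdiff_of_notMem _ haT, Finset.sum_insert (by
        simp [Finset.mem_sdiff, ha])]
      ring_nf
    have h2 : ∀ T ∈ s.powerset,
        (∑ i ∈ insert a T, c i - ∑ i ∈ insert a s \ insert a T, c i)^2
        = (∑ i ∈ T, c i - ∑ i ∈ s \ T, c i + c a)^2 := by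
      intro T hT
      have haT : a ∉ T := fun h => ha (Finset.mem_powerset.1 hT h)
      have : insert a s \ insert a T = s \ T := by
        ext x
        simp only [Finset.mem_sdiff, Finset.mem_insert]
        constructor
        · rintro ⟨hx1 | hx1, hx2⟩
          · exact (hx2 (Or.inl hx1)).elim
          · exact ⟨hx1, fun h => hx2 (Or.inr h)⟩
        · rintro ⟨hx1, hx2⟩
          exact ⟨Or.inr hx1, by rintro (rfl | h); exacts [ha hx1, hx2 h]⟩
      rw [this, Finset.sum_insert haT]
      ring_nf
    rw [Finset.sum_congr rfl h1, Finset.sum_congr rfl h2]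
    have : ∀ T ∈ s.powerset,
        ((∑ i ∈ T, c i - ∑ i ∈ s \ T, c i - c a)^2) = (∑ i ∈ T, c i - ∑ i ∈ s \ T, c i)^2 - 2*(∑ i ∈ T, c i - ∑ i ∈ s \ T, c i)*c a + (c a)^2 := by
      intro T _; ring
    rw [Finset.sum_congr rfl this]
    have : ∀ T ∈ s.powerset,
        ((∑ i ∈ T, c i - ∑ i ∈ s \ T, c i + c a)^2) = (∑ i ∈ T, c i - ∑ i ∈ s \ T, c i)^2 + 2*(∑ i ∈ T, c i - ∑ i ∈ s \ T, c i)*c a + (c a)^2 := by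
      intro T _; ring
    rw [Finset.sum_congr rfl this]
    simp only [Finset.sum_add_distrib, Finset.sum_sub_distrib, Finset.sum_const, Finset.card_powerset, ih]
    rw [Finset.sum_insert ha, Finset.card_insert_of_notMem ha]
    ring

/-- The integer hull of the knapsack polytope `{x ≥ 0 : aᵀx = b}`. -/
def knapsackHull {n : ℕ} (a : Fin n → ℤ) (b : ℤ) : Set (Fin n → ℝ) :=
  convexHull ℝ
    {x | ∃ z : Fin n → ℤ, (∀ i, 0 ≤ z i) ∧ (∑ i, a i * z i) = b ∧ x = fun i => (z i : ℝ)}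

/-- `v` is a vertex of `P` if `v ∈ P` and `v` is not in the convex hull of `P \ {v}`. -/
def IsVertex {n : ℕ} (P : Set (Fin n → ℝ)) (v : Fin n → ℝ) : Prop :=
  v ∈ P ∧ v ∉ convexHull ℝ (P \ {v})

lemma vertex_mem {n : ℕ} (a : Fin n → ℤ) (b : ℤ) (v : Fin n → ℝ)
    (hv : IsVertex (knapsackHull a b) v) :
    ∃ z : Fin n → ℤ, (∀ i, 0 ≤ z i) ∧ (∑ i, a i * z i) = b ∧ v = fun i => (z i : ℝ) := by
  by_contra h
  have hsub : {x : Fin n → ℝ | ∃ z : Fin n → ℤ, (∀ i, 0 ≤ z i) ∧ (∑ i, a i * z i) = b ∧ x = fun i => (z i : ℝ)}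
      ⊆ knapsackHull a b \ {v} := by
    intro x hx
    refine ⟨subset_convexHull ℝ _ hx, ?_⟩
    rintro rfl
    exact h hx
  exact hv.2 (convexHull_mono hsub hv.1)

lemma inj_subset_sums {n : ℕ} (a : Fin n → ℤ) (b : ℤ) (v : Fin n → ℝ)
    (hv : IsVertex (knapsackHull a b) v) (z : Fin n → ℤ)
    (hz0 : ∀ i, 0 ≤ z i) (hzb : (∑ i, a i * z i) = b) (hvz : v = fun i => (z i : ℝ))
    (S : Finset (Fin n)) (hS : ∀ i ∈ S, z i ≠ 0)
    (T₁ T₂ : Finset (Fin n)) (hT₁ : T₁ ⊆ S) (hT₂ : T₂ ⊆ S)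
    (hsum : ∑ i ∈ T₁, a i = ∑ i ∈ T₂, a i) : T₁ = T₂ := by
  classical
  by_contra hne
  set e : Fin n → ℤ := fun i => (if i ∈ T₁ then 1 else 0) - (if i ∈ T₂ then 1 else 0) with he
  have he_bd : ∀ i, e i = 0 ∨ e i = 1 ∨ e i = -1 := by
    intro i; simp only [he]; split <;> split <;> simp
  have he_supp : ∀ i, i ∉ S → e i = 0 := by
    intro i hi
    simp only [he, if_neg (fun h => hi (hT₁ h)), if_neg (fun h => hi (hT₂ h)), sub_self]
  have hz1 : ∀ i ∈ S, 1 ≤ z i := fun i hi => lt_of_le_of_ne (hz0 i) (Ne.symm (hS i hi))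
  have hae : ∑ i, a i * e i = 0 := by
    simp only [he, mul_sub, Finset.sum_sub_distrib, mul_ite, mul_one, mul_zero]
    rw [Finset.sum_ite_mem, Finset.sum_ite_mem, Finset.univ_inter, Finset.univ_inter, hsum, sub_self]
  have hex : ∃ i, e i ≠ 0 := by
    by_contra hc
    push_neg at hc
    apply hne
    ext i
    have := hc i
    simp only [he, sub_eq_zero] at this
    by_cases h1 : i ∈ T₁ <;> by_cases h2 : i ∈ T₂ <;> simp_all
  obtain ⟨i₀, hi₀⟩ := hex
  have hmem : ∀ ε : ℤ, ε = 1 ∨ ε = -1 → (fun i => ((z i + ε * e i : ℤ) : ℝ)) ∈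
      {x : Fin n → ℝ | ∃ w : Fin n → ℤ, (∀ i, 0 ≤ w i) ∧ (∑ i, a i * w i) = b ∧ x = fun i => (w i : ℝ)} := by
    intro ε hε
    refine ⟨fun i => z i + ε * e i, ?_, ?_, rfl⟩
    · intro i
      show 0 ≤ z i + ε * e i
      by_cases hi : i ∈ S
      · have := hz1 i hi
        rcases he_bd i with h | h | h <;> rcases hε with rfl | rfl <;> omega
      · rw [he_supp i hi]; simpa using hz0 i
    · have : ∑ i, a i * (z i + ε * e i) = (∑ i, a i * z i) + ε * ∑ i, a i * e i := by
        rw [Finset.mul_sum, ← Finset.sum_add_distrib]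
        congr 1; ext i; ring
      rw [this, hae, hzb]; ring
  set xp : Fin n → ℝ := fun i => ((z i + e i : ℤ) : ℝ) with hxp
  set xm : Fin n → ℝ := fun i => ((z i - e i : ℤ) : ℝ) with hxm
  have hxpm : xp ∈ knapsackHull a b := by
    have h1 := hmem 1 (Or.inl rfl)
    have heq : xp = fun i => ((z i + 1 * e i : ℤ) : ℝ) := by
      funext i; show ((z i + e i : ℤ) : ℝ) = _; congr 1; ring
    rw [heq]; exact subset_convexHull ℝ _ h1
  have hxmm : xm ∈ knapsackHull a b := by
    have h1 := hmem (-1) (Or.inr rfl)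
    have heq : xm = fun i => ((z i + (-1) * e i : ℤ) : ℝ) := by
      funext i; show ((z i - e i : ℤ) : ℝ) = _; congr 1; ring
    rw [heq]; exact subset_convexHull ℝ _ h1
  have hxpne : xp ≠ v := by
    intro h
    have := congrFun h i₀
    rw [hvz] at this
    simp only [hxp] at this
    push_cast at this
    have h0 : (e i₀ : ℝ) = 0 := by linarith
    exact hi₀ (by exact_mod_cast h0)
  have hxmne : xm ≠ v := by
    intro h
    have := congrFun h i₀
    rw [hvz] at this
    simp only [hxm] at this
    push_cast at this
    have h0 : (e i₀ : ℝ) = 0 := by linarith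
    exact hi₀ (by exact_mod_cast h0)
  have hseg : v ∈ segment ℝ xp xm := by
    refine ⟨1/2, 1/2, by norm_num, by norm_num, by norm_num, ?_⟩
    ext i
    simp only [hxp, hxm, hvz, Pi.add_apply, Pi.smul_apply, smul_eq_mul]
    push_cast
    ring
  apply hv.2
  have : ({xp, xm} : Set (Fin n → ℝ)) ⊆ knapsackHull a b \ {v} := by
    rintro x (rfl | rfl)
    exacts [⟨hxpm, hxpne⟩, ⟨hxmm, hxmne⟩]
  exact convexHull_mono this (by rw [convexHull_pair]; exact hseg)

open Classical in
theorem stmt2 {n : ℕ} (a : Fin n → ℤ) (ha : a ≠ 0) (b : ℤ) (v : Fin n → ℝ)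
    (hv : IsVertex (knapsackHull a b) v)
    (S : Finset (Fin n)) (hS : S = Finset.univ.filter (fun i => v i ≠ 0)) :
    (S.card : ℝ) ≤ Real.logb 2 (3.51 * Real.sqrt (∑ i ∈ S, ((a i : ℝ)) ^ 2)) := by
  obtain ⟨z, hz0, hzb, hvz⟩ := vertex_mem a b v hv
  have hSz : ∀ i ∈ S, z i ≠ 0 := by
    intro i hi
    rw [hS, Finset.mem_filter] at hi
    intro h
    apply hi.2
    rw [hvz]
    simp [h]
  have inj : ∀ T₁ T₂ : Finset (Fin n), T₁ ⊆ S → T₂ ⊆ S →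
      (∑ i ∈ T₁, a i = ∑ i ∈ T₂, a i) → T₁ = T₂ :=
    fun T₁ T₂ h1 h2 h3 => inj_subset_sums a b v hv z hz0 hzb hvz S hSz T₁ T₂ h1 h2 h3
  rcases Nat.eq_zero_or_pos S.card with hs0 | hs1
  · rw [Finset.card_eq_zero.mp hs0]
    simp
  -- nonzero coefficients on the support
  have hai : ∀ i ∈ S, a i ≠ 0 := by
    intro i hi hia
    have : ({i} : Finset (Fin n)) = ∅ := by
      apply inj _ _ (by simpa using hi) (Finset.empty_subset S)
      simp [hia]
    simp at this
  set N : ℤ := ∑ i ∈ S, (a i)^2 with hN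
  have hNcard : (S.card : ℤ) ≤ N := by
    rw [hN]
    calc (S.card : ℤ) = ∑ _i ∈ S, 1 := by simp
    _ ≤ ∑ i ∈ S, (a i)^2 := by
        apply Finset.sum_le_sum
        intro i hi
        have := hai i hi
        have h1 : 1 ≤ |a i| := Int.one_le_abs (by omega)
        calc (1 : ℤ) = 1^2 := by norm_num
        _ ≤ |a i|^2 := by apply pow_le_pow_left₀ (by norm_num) h1
        _ = (a i)^2 := sq_abs _
  have hN1 : 1 ≤ N := le_trans (by exact_mod_cast hs1) hNcard
  set d : Finset (Fin n) → ℤ := fun T => ∑ i ∈ T, a i - ∑ i ∈ S \ T, a i with hd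
  have hvar : ∑ T ∈ S.powerset, (d T)^2 = 2 ^ S.card * N := varid a S
  set Bad := S.powerset.filter (fun T => 4*N < (d T)^2) with hBadDef
  set Good := S.powerset.filter (fun T => ¬ 4*N < (d T)^2) with hGoodDef
  have hcards : Bad.card + Good.card = 2 ^ S.card := by
    rw [hBadDef, hGoodDef, Finset.card_filter_add_card_filter_not, Finset.card_powerset]
  have hBadBound : (Bad.card : ℤ) * (4*N+1) ≤ 2 ^ S.card * N := by
    calc (Bad.card : ℤ) * (4*N+1) = Bad.card • (4*N+1) := (nsmul_eq_mul _ _).symm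
    _ ≤ ∑ T ∈ Bad, (d T)^2 := Finset.card_nsmul_le_sum _ _ _ (by
        intro T hT
        rw [hBadDef, Finset.mem_filter] at hT
        omega)
    _ ≤ ∑ T ∈ S.powerset, (d T)^2 := Finset.sum_le_sum_of_subset_of_nonneg
        (Finset.filter_subset _ _) (fun T _ _ => sq_nonneg _)
    _ = 2 ^ S.card * N := hvar
  have hBad4 : 4 * (Bad.card : ℤ) ≤ 2 ^ S.card := by
    have h1 : (4 * (Bad.card : ℤ)) * N ≤ (2 ^ S.card) * N := by nlinarith [Int.natCast_nonneg Bad.card]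
    exact le_of_mul_le_mul_right h1 (by omega)
  have h2nat : ((2 ^ S.card : ℕ) : ℤ) = (2:ℤ) ^ S.card := by push_cast; ring
  have hGood3 : 3 * (2 : ℤ) ^ S.card ≤ 4 * Good.card := by
    have hBad4' : 4 * (Bad.card : ℤ) ≤ ((2 ^ S.card : ℕ) : ℤ) := by rw [h2nat]; exact hBad4
    rw [← h2nat]
    omega
  -- count good subsets via injectivity: they map into a short integer interval
  set M : ℕ := (4*N).toNat with hM
  set K : ℕ := Nat.sqrt M with hK
  have hMN : (M : ℤ) = 4 * N := Int.toNat_of_nonneg (by omega)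
  have hK2 : ((K:ℤ))^2 ≤ 4*N := by
    have h : ((K:ℤ))^2 ≤ (M : ℤ) := by exact_mod_cast Nat.sqrt_le' M
    rwa [hMN] at h
  have hK3 : 4*N < ((K:ℤ)+1)^2 := by
    have h : (M : ℤ) < ((K:ℤ)+1)^2 := by exact_mod_cast Nat.lt_succ_sqrt' M
    rwa [hMN] at h
  have habs : ∀ m : ℤ, m^2 ≤ 4*N → -(K:ℤ) ≤ m ∧ m ≤ (K:ℤ) := by
    intro m hm
    constructor <;> nlinarith [Int.natCast_nonneg K]
  set σ : ℤ := ∑ i ∈ S, a i with hσ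
  have hdT : ∀ T ∈ S.powerset, d T = 2 * (∑ i ∈ T, a i) - σ := by
    intro T hT
    rw [Finset.mem_powerset] at hT
    have h : (∑ i ∈ S \ T, a i) + ∑ i ∈ T, a i = ∑ i ∈ S, a i := Finset.sum_sdiff hT
    show (∑ i ∈ T, a i) - (∑ i ∈ S \ T, a i) = 2 * (∑ i ∈ T, a i) - σ
    rw [hσ]
    omega
  set f : Finset (Fin n) → ℤ := fun T => ∑ i ∈ T, a i with hf
  set l : ℤ := (σ - K + 1) / 2 with hl
  set u : ℤ := (σ + K) / 2 with hu
  have himg : Good.image f ⊆ Finset.Icc l u := by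
    intro m hm
    rw [Finset.mem_image] at hm
    obtain ⟨T, hT, rfl⟩ := hm
    rw [hGoodDef, Finset.mem_filter] at hT
    have hdval := hdT T hT.1
    have hsq : (d T)^2 ≤ 4*N := not_lt.mp hT.2
    rw [hdval] at hsq
    obtain ⟨ha1, ha2⟩ := habs _ hsq
    rw [Finset.mem_Icc, hl, hu]
    constructor
    · show (σ - ↑K + 1) / 2 ≤ ∑ i ∈ T, a i
      omega
    · show (∑ i ∈ T, a i) ≤ (σ + ↑K) / 2
      omega
  have hinjf : Set.InjOn f Good := by
    intro T₁ hT₁ T₂ hT₂ h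
    have m₁ : T₁ ∈ S.powerset := (Finset.mem_filter.1 (by exact_mod_cast hT₁)).1
    have m₂ : T₂ ∈ S.powerset := (Finset.mem_filter.1 (by exact_mod_cast hT₂)).1
    exact inj _ _ (Finset.mem_powerset.1 m₁) (Finset.mem_powerset.1 m₂) h
  have hGoodK : (Good.card : ℤ) ≤ (K : ℤ) + 1 := by
    have h1 : Good.card = (Good.image f).card := (Finset.card_image_of_injOn hinjf).symm
    have h2 : (Good.image f).card ≤ (Finset.Icc l u).card := Finset.card_le_card himg
    have h3 : (Finset.Icc l u).card = (u + 1 - l).toNat := Int.card_Icc l u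
    have h4 : 2*u ≤ σ + K := by rw [hu]; omega
    have h5 : σ - K ≤ 2*l := by rw [hl]; omega
    omega
  -- main inequality over ℤ
  have hmainZ : 3 * (2:ℤ) ^ S.card ≤ 4 * (K:ℤ) + 4 := by linarith
  -- move to ℝ
  set Na : ℝ := ∑ i ∈ S, ((a i : ℝ))^2 with hNa
  have hNaN : (N : ℝ) = Na := by rw [hN, hNa]; push_cast; ring
  have hNa1 : (1:ℝ) ≤ Na := by rw [← hNaN]; exact_mod_cast hN1
  have hNa0 : (0:ℝ) ≤ Na := by linarith
  have hsqK : (K : ℝ) ≤ 2 * Real.sqrt Na := by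
    have h1 : ((K:ℝ))^2 ≤ 4 * Na := by
      rw [← hNaN]
      exact_mod_cast hK2
    nlinarith [Real.sq_sqrt hNa0, Real.sqrt_nonneg Na, Int.natCast_nonneg K]
  have hmainR : 3 * (2:ℝ) ^ S.card ≤ 8 * Real.sqrt Na + 4 := by
    have := hmainZ
    have hcast : (3:ℝ) * 2 ^ S.card ≤ 4 * (K:ℝ) + 4 := by exact_mod_cast this
    linarith
  have hsqrt1 : (1:ℝ) ≤ Real.sqrt Na := by
    rw [show (1:ℝ) = Real.sqrt 1 by simp]
    exact Real.sqrt_le_sqrt hNa1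
  have h2s : (2:ℝ) ^ S.card ≤ 3.51 * Real.sqrt Na := by
    rcases le_or_gt 3 N with hN3 | hN3
    · have hNa3 : (3:ℝ) ≤ Na := by rw [← hNaN]; exact_mod_cast hN3
      have h17 : (1.7 : ℝ) ≤ Real.sqrt Na := by
        rw [show (1.7:ℝ) = Real.sqrt (1.7^2) by rw [Real.sqrt_sq]; norm_num]
        exact Real.sqrt_le_sqrt (by nlinarith)
      linarith
    · -- N ≤ 2, so S.card ≤ 2
      have hcard2 : S.card ≤ 2 := by
        have : (S.card : ℤ) ≤ 2 := le_trans hNcard (by omega)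
        exact_mod_cast this
      have hc12 : S.card = 1 ∨ S.card = 2 := by omega
      rcases hc12 with h | h
      · rw [h]
        norm_num
        linarith
      · have hN2 : (2:ℤ) ≤ N := by rw [h] at hNcard; exact_mod_cast hNcard
        have hNa2 : (2:ℝ) ≤ Na := by rw [← hNaN]; exact_mod_cast hN2
        have h14 : (1.41 : ℝ) ≤ Real.sqrt Na := by
          rw [show (1.41:ℝ) = Real.sqrt (1.41^2) by rw [Real.sqrt_sq]; norm_num]
          exact Real.sqrt_le_sqrt (by nlinarith)
        rw [h]
        norm_num
        linarith
  have hpos : 0 < 3.51 * Real.sqrt Na := by linarith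
  rw [Real.le_logb_iff_rpow_le one_lt_two hpos, Real.rpow_natCast]
  exact h2s
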